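/- arXiv:1205.3682 — 3 statements merged into one kernel-verified Lean document; each statement's English description precedes it below -/
import Mathlib

section
/- Let G be a ℂ-submodule of (m × n → ℂ) and ρA a fixed matrix such that trB |ψ⟩⟨ψ| = ρA for every unit vector ψ ∈ G. Then for any two orthogonal vectors ψ1, ψ2 ∈ G and any matrix M : Matrix m m ℂ, one has ⟨ψ1, (M ⊗ I) ψ2⟩ = 0, i.e., ∑_{(i,j)} conj (ψ1 (i,j)) * (∑ i', M i i' * ψ2 (i', j)) = 0. -/
open scoped ComplexOrder

noncomputable section

/-- Partial trace over the second factor. -/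
def trB {m n : Type*} [Fintype n] (ρ : Matrix (m × n) (m × n) ℂ) : Matrix m m ℂ :=
  Matrix.of fun i i' => ∑ j, ρ (i, j) (i', j)

/-- Partial trace over the first factor. -/
def trA {m n : Type*} [Fintype m] (ρ : Matrix (m × n) (m × n) ℂ) : Matrix n n ℂ :=
  Matrix.of fun j j' => ∑ i, ρ (i, j) (i, j')

/-- The outer product `|ψ⟩⟨φ|`. -/
def outer {k : Type*} (ψ φ : k → ℂ) : Matrix k k ℂ :=
  Matrix.of fun x y => ψ x * (starRingEnd ℂ) (φ y)

/-- A density matrix: positive semidefinite with trace one. -/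
def IsDensity {k : Type*} [Fintype k] (ρ : Matrix k k ℂ) : Prop :=
  ρ.PosSemidef ∧ ρ.trace = 1

/-- `P` is the matrix of the orthogonal projection onto the submodule `S`. -/
def IsOrthProjOnto {k : Type*} [Fintype k] (S : Submodule ℂ (k → ℂ)) (P : Matrix k k ℂ) : Prop :=
  P.IsHermitian ∧ P * P = P ∧ (∀ x, P.mulVec x ∈ S) ∧ ∀ y ∈ S, P.mulVec y = y

/-- `T` is supported on `S`: `P * T * P = T` for the orthogonal projection `P` onto `S`. -/
def SupportedOn {k : Type*} [Fintype k] (S : Submodule ℂ (k → ℂ)) (T : Matrix k k ℂ) : Prop :=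
  ∃ P, IsOrthProjOnto S P ∧ P * T * P = T

/-- The set of reduced density matrices on the first factor. -/
def DB {m n : Type*} [Fintype m] [Fintype n] (S : Submodule ℂ (m × n → ℂ)) :
    Set (Matrix m m ℂ) :=
  {σ | ∃ ρ, IsDensity ρ ∧ SupportedOn S ρ ∧ trB ρ = σ}

lemma sum_conj_self {k : Type*} [Fintype k] (ψ : k → ℂ) :
    ∑ x, (starRingEnd ℂ) (ψ x) * ψ x = ((∑ x, ‖ψ x‖ ^ 2 : ℝ) : ℂ) := by
  rw [Complex.ofReal_sum]
  refine Finset.sum_congr rfl fun x _ => ?_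
  rw [mul_comm, Complex.mul_conj]
  norm_cast
  simp [Complex.normSq_eq_norm_sq]

lemma unit_iff {k : Type*} [Fintype k] (ψ : k → ℂ) :
    (∑ x, ‖ψ x‖ ^ 2) = 1 ↔ ∑ x, (starRingEnd ℂ) (ψ x) * ψ x = 1 := by
  rw [sum_conj_self]
  constructor
  · intro h1; rw [h1]; norm_num
  · intro h1; exact_mod_cast h1

lemma cross_vanishes {m n : Type*} [Fintype m] [Fintype n]
    (G : Submodule ℂ (m × n → ℂ)) (ρA : Matrix m m ℂ)
    (hG : ∀ ψ : m × n → ℂ, ψ ∈ G → (∑ x, ‖ψ x‖ ^ 2) = 1 → trB (outer ψ ψ) = ρA)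
    (u v : m × n → ℂ) (hu : u ∈ G) (hv : v ∈ G)
    (hu1 : ∑ x, (starRingEnd ℂ) (u x) * u x = 1)
    (hv1 : ∑ x, (starRingEnd ℂ) (v x) * v x = 1)
    (huv : ∑ x, (starRingEnd ℂ) (u x) * v x = 0)
    (i i' : m) :
    ∑ j, u (i, j) * (starRingEnd ℂ) (v (i', j)) = 0 := by
  classical
  have hvu : ∑ x, (starRingEnd ℂ) (v x) * u x = 0 := by
    have := congrArg (starRingEnd ℂ) huv
    simpa [map_sum, mul_comm] using this
  set c : ℝ := (Real.sqrt 2)⁻¹ with hc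
  have hcr : c ^ 2 = 1 / 2 := by
    rw [hc, inv_pow, Real.sq_sqrt (by norm_num : (0:ℝ) ≤ 2)]
    norm_num
  have hc2 : ((c : ℂ)) ^ 2 = 1 / 2 := by
    rw [← Complex.ofReal_pow, hcr]; norm_num
  -- entry lemma for unit vectors in G
  have entry : ∀ w : m × n → ℂ, w ∈ G → (∑ x, (starRingEnd ℂ) (w x) * w x = 1) →
      ∑ j, w (i, j) * (starRingEnd ℂ) (w (i', j)) = ρA i i' := by
    intro w hwG hw1
    have := congrFun (congrFun (hG w hwG ((unit_iff w).mpr hw1)) i) i'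
    simpa [trB, outer] using this
  set w1 : m × n → ℂ := (c : ℂ) • (u + v) with hw1def
  set w2 : m × n → ℂ := (c : ℂ) • (u + Complex.I • v) with hw2def
  have hw1G : w1 ∈ G := G.smul_mem _ (G.add_mem hu hv)
  have hw2G : w2 ∈ G := G.smul_mem _ (G.add_mem hu (G.smul_mem _ hv))
  have hw1x : ∀ x, w1 x = (c : ℂ) * (u x + v x) := fun x => rfl
  have hw2x : ∀ x, w2 x = (c : ℂ) * (u x + Complex.I * v x) := fun x => rfl
  -- unit norms
  have hw1u : ∑ x, (starRingEnd ℂ) (w1 x) * w1 x = 1 := by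
    have hterm : ∀ x, (starRingEnd ℂ) (w1 x) * w1 x =
        (c : ℂ) ^ 2 * ((starRingEnd ℂ) (u x) * u x + (starRingEnd ℂ) (u x) * v x
          + (starRingEnd ℂ) (v x) * u x + (starRingEnd ℂ) (v x) * v x) := by
      intro x
      simp only [hw1x, map_mul, map_add, Complex.conj_ofReal]
      ring
    simp only [hterm]
    rw [← Finset.mul_sum]
    rw [show (∑ x, ((starRingEnd ℂ) (u x) * u x + (starRingEnd ℂ) (u x) * v x
          + (starRingEnd ℂ) (v x) * u x + (starRingEnd ℂ) (v x) * v x)) =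
        (∑ x, (starRingEnd ℂ) (u x) * u x) + (∑ x, (starRingEnd ℂ) (u x) * v x)
          + (∑ x, (starRingEnd ℂ) (v x) * u x) + (∑ x, (starRingEnd ℂ) (v x) * v x) by
      simp [Finset.sum_add_distrib]]
    rw [hu1, hv1, huv, hvu, hc2]; ring
  have hw2u : ∑ x, (starRingEnd ℂ) (w2 x) * w2 x = 1 := by
    have hterm : ∀ x, (starRingEnd ℂ) (w2 x) * w2 x =
        (c : ℂ) ^ 2 * ((starRingEnd ℂ) (u x) * u x + Complex.I * ((starRingEnd ℂ) (u x) * v x)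
          - Complex.I * ((starRingEnd ℂ) (v x) * u x) + (starRingEnd ℂ) (v x) * v x) := by
      intro x
      simp only [hw2x, map_mul, map_add, Complex.conj_ofReal, Complex.conj_I]
      ring_nf
      rw [Complex.I_sq]
      ring
    simp only [hterm]
    rw [← Finset.mul_sum]
    rw [show (∑ x, ((starRingEnd ℂ) (u x) * u x + Complex.I * ((starRingEnd ℂ) (u x) * v x)
          - Complex.I * ((starRingEnd ℂ) (v x) * u x) + (starRingEnd ℂ) (v x) * v x)) =
        (∑ x, (starRingEnd ℂ) (u x) * u x) + Complex.I * (∑ x, (starRingEnd ℂ) (u x) * v x)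
          - Complex.I * (∑ x, (starRingEnd ℂ) (v x) * u x)
          + (∑ x, (starRingEnd ℂ) (v x) * v x) by
      simp [Finset.sum_add_distrib, Finset.sum_sub_distrib, Finset.mul_sum]]
    rw [hu1, hv1, huv, hvu, hc2]; ring
  -- entry equations
  set ρ : ℂ := ρA i i' with hρ
  set A : ℂ := ∑ j, u (i, j) * (starRingEnd ℂ) (v (i', j)) with hA
  set B : ℂ := ∑ j, v (i, j) * (starRingEnd ℂ) (u (i', j)) with hB
  have eu : ∑ j, u (i, j) * (starRingEnd ℂ) (u (i', j)) = ρ := entry u hu hu1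
  have ev : ∑ j, v (i, j) * (starRingEnd ℂ) (v (i', j)) = ρ := entry v hv hv1
  have e1 : (c : ℂ) ^ 2 * (ρ + A + B + ρ) = ρ := by
    have h := entry w1 hw1G hw1u
    have hterm : ∀ j, w1 (i, j) * (starRingEnd ℂ) (w1 (i', j)) =
        (c : ℂ) ^ 2 * (u (i, j) * (starRingEnd ℂ) (u (i', j))
          + u (i, j) * (starRingEnd ℂ) (v (i', j))
          + v (i, j) * (starRingEnd ℂ) (u (i', j))
          + v (i, j) * (starRingEnd ℂ) (v (i', j))) := by
      intro j
      simp only [hw1x, map_mul, map_add, Complex.conj_ofReal]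
      ring
    calc (c : ℂ) ^ 2 * (ρ + A + B + ρ)
        = ∑ j, w1 (i, j) * (starRingEnd ℂ) (w1 (i', j)) := by
          simp only [hterm]
          rw [← Finset.mul_sum]
          congr 1
          rw [Finset.sum_add_distrib, Finset.sum_add_distrib, Finset.sum_add_distrib,
            eu, ev, ← hA, ← hB]
      _ = ρ := h
  have e2 : (c : ℂ) ^ 2 * (ρ - Complex.I * A + Complex.I * B + ρ) = ρ := by
    have h := entry w2 hw2G hw2u
    have hterm : ∀ j, w2 (i, j) * (starRingEnd ℂ) (w2 (i', j)) =
        (c : ℂ) ^ 2 * (u (i, j) * (starRingEnd ℂ) (u (i', j))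
          - Complex.I * (u (i, j) * (starRingEnd ℂ) (v (i', j)))
          + Complex.I * (v (i, j) * (starRingEnd ℂ) (u (i', j)))
          + v (i, j) * (starRingEnd ℂ) (v (i', j))) := by
      intro j
      simp only [hw2x, map_mul, map_add, Complex.conj_ofReal, Complex.conj_I]
      ring_nf
      rw [Complex.I_sq]
      ring
    calc (c : ℂ) ^ 2 * (ρ - Complex.I * A + Complex.I * B + ρ)
        = ∑ j, w2 (i, j) * (starRingEnd ℂ) (w2 (i', j)) := by
          simp only [hterm]
          rw [← Finset.mul_sum]
          congr 1
          rw [Finset.sum_add_distrib, Finset.sum_add_distrib, Finset.sum_sub_distrib,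
            ← Finset.mul_sum, ← Finset.mul_sum, eu, ev, ← hA, ← hB]
      _ = ρ := h
  rw [hc2] at e1 e2
  show A = 0
  linear_combination e1 + Complex.I * e2 + (A - B)/2 * Complex.I_sq


theorem local_operator_matrix_element_vanishes
    {m n : Type*} [Fintype m] [Fintype n] [DecidableEq m] [DecidableEq n]
    (G : Submodule ℂ (m × n → ℂ)) (ρA : Matrix m m ℂ)
    (hG : ∀ ψ : m × n → ℂ, ψ ∈ G → (∑ x, ‖ψ x‖ ^ 2) = 1 → trB (outer ψ ψ) = ρA)
    (ψ1 ψ2 : m × n → ℂ) (h1 : ψ1 ∈ G) (h2 : ψ2 ∈ G)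
    (horth : ∑ x, (starRingEnd ℂ) (ψ1 x) * ψ2 x = 0)
    (M : Matrix m m ℂ) :
    ∑ p : m × n, (starRingEnd ℂ) (ψ1 p) * (∑ i', M p.1 i' * ψ2 (i', p.2)) = 0 := by
  classical
  set a : ℝ := ∑ x, ‖ψ1 x‖ ^ 2 with ha
  set b : ℝ := ∑ x, ‖ψ2 x‖ ^ 2 with hb
  by_cases haz : a = 0
  · have hz : ∀ x, ψ1 x = 0 := by
      intro x
      have := (Finset.sum_eq_zero_iff_of_nonneg
        (fun x _ => by positivity : ∀ x ∈ Finset.univ, (0:ℝ) ≤ ‖ψ1 x‖ ^ 2)).mp haz x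
        (Finset.mem_univ x)
      have := pow_eq_zero_iff (n := 2) (by norm_num) |>.mp this
      simpa using this
    simp [hz]
  by_cases hbz : b = 0
  · have hz : ∀ x, ψ2 x = 0 := by
      intro x
      have := (Finset.sum_eq_zero_iff_of_nonneg
        (fun x _ => by positivity : ∀ x ∈ Finset.univ, (0:ℝ) ≤ ‖ψ2 x‖ ^ 2)).mp hbz x
        (Finset.mem_univ x)
      have := pow_eq_zero_iff (n := 2) (by norm_num) |>.mp this
      simpa using this
    simp [hz]
  have hapos : 0 < a := lt_of_le_of_ne (Finset.sum_nonneg fun x _ => by positivity)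
    (Ne.symm haz)
  have hbpos : 0 < b := lt_of_le_of_ne (Finset.sum_nonneg fun x _ => by positivity)
    (Ne.symm hbz)
  set α : ℝ := (Real.sqrt a)⁻¹ with hα
  set β : ℝ := (Real.sqrt b)⁻¹ with hβ
  have hαpos : 0 < α := by positivity
  have hβpos : 0 < β := by positivity
  have hα2 : (α : ℂ) ^ 2 * (a : ℂ) = 1 := by
    have : α ^ 2 * a = 1 := by
      rw [hα, inv_pow, Real.sq_sqrt hapos.le]
      field_simp
    calc (α : ℂ) ^ 2 * (a : ℂ) = ((α ^ 2 * a : ℝ) : ℂ) := by push_cast; ring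
      _ = 1 := by rw [this]; norm_num
  have hβ2 : (β : ℂ) ^ 2 * (b : ℂ) = 1 := by
    have : β ^ 2 * b = 1 := by
      rw [hβ, inv_pow, Real.sq_sqrt hbpos.le]
      field_simp
    calc (β : ℂ) ^ 2 * (b : ℂ) = ((β ^ 2 * b : ℝ) : ℂ) := by push_cast; ring
      _ = 1 := by rw [this]; norm_num
  set u : m × n → ℂ := (β : ℂ) • ψ2 with hu
  set v : m × n → ℂ := (α : ℂ) • ψ1 with hv
  have huG : u ∈ G := G.smul_mem _ h2
  have hvG : v ∈ G := G.smul_mem _ h1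
  have hu1 : ∑ x, (starRingEnd ℂ) (u x) * u x = 1 := by
    have : ∀ x, (starRingEnd ℂ) (u x) * u x
        = (β : ℂ) ^ 2 * ((starRingEnd ℂ) (ψ2 x) * ψ2 x) := by
      intro x
      simp only [hu, Pi.smul_apply, smul_eq_mul, map_mul, Complex.conj_ofReal]
      ring
    simp only [this]
    rw [← Finset.mul_sum, sum_conj_self, ← hb, hβ2]
  have hv1 : ∑ x, (starRingEnd ℂ) (v x) * v x = 1 := by
    have : ∀ x, (starRingEnd ℂ) (v x) * v x
        = (α : ℂ) ^ 2 * ((starRingEnd ℂ) (ψ1 x) * ψ1 x) := by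
      intro x
      simp only [hv, Pi.smul_apply, smul_eq_mul, map_mul, Complex.conj_ofReal]
      ring
    simp only [this]
    rw [← Finset.mul_sum, sum_conj_self, ← ha, hα2]
  have horth' : ∑ x, (starRingEnd ℂ) (ψ2 x) * ψ1 x = 0 := by
    have := congrArg (starRingEnd ℂ) horth
    simpa [map_sum, mul_comm] using this
  have huv : ∑ x, (starRingEnd ℂ) (u x) * v x = 0 := by
    have : ∀ x, (starRingEnd ℂ) (u x) * v x
        = (β : ℂ) * (α : ℂ) * ((starRingEnd ℂ) (ψ2 x) * ψ1 x) := by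
      intro x
      simp only [hu, hv, Pi.smul_apply, smul_eq_mul, map_mul, Complex.conj_ofReal]
      ring
    simp only [this]
    rw [← Finset.mul_sum, horth', mul_zero]
  have hz : ∀ i i' : m, ∑ j, (starRingEnd ℂ) (ψ1 (i, j)) * ψ2 (i', j) = 0 := by
    intro i i'
    have key := cross_vanishes G ρA hG u v huG hvG hu1 hv1 huv i' i
    have expand : ∑ j, u (i', j) * (starRingEnd ℂ) (v (i, j))
        = (β : ℂ) * (α : ℂ) * ∑ j, (starRingEnd ℂ) (ψ1 (i, j)) * ψ2 (i', j) := by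
      rw [Finset.mul_sum]
      refine Finset.sum_congr rfl fun j _ => ?_
      simp only [hu, hv, Pi.smul_apply, smul_eq_mul, map_mul, Complex.conj_ofReal]
      ring
    rw [expand] at key
    have hne : (β : ℂ) * (α : ℂ) ≠ 0 := by
      simp only [ne_eq, mul_eq_zero, Complex.ofReal_eq_zero]
      push_neg
      exact ⟨hβpos.ne', hαpos.ne'⟩
    exact (mul_eq_zero.mp key).resolve_left hne
  rw [Fintype.sum_prod_type]
  apply Finset.sum_eq_zero
  intro i _
  have hswap : ∀ j, (starRingEnd ℂ) (ψ1 (i, j)) * (∑ i', M i i' * ψ2 (i', j))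
      = ∑ i', M i i' * ((starRingEnd ℂ) (ψ1 (i, j)) * ψ2 (i', j)) := by
    intro j
    rw [Finset.mul_sum]
    exact Finset.sum_congr rfl fun _ _ => by ring
  simp only [hswap]
  rw [Finset.sum_comm]
  apply Finset.sum_eq_zero
  intro i' _
  rw [← Finset.mul_sum, hz i i', mul_zero]

end
end

section
/- Let S be a ℂ-submodule of (m × n → ℂ) and let ψ1, ψ2 ∈ S be orthogonal unit vectors with trB |ψ1⟩⟨ψ1| = trB |ψ2⟩⟨ψ2| = ρA. If ρA is an extreme point (over ℝ) of D_B(S) = {trB ρ | ρ a density matrix supported on S}, then trB |ψ⟩⟨ψ| = ρA for every unit vector ψ in the ℂ-span of {ψ1, ψ2}. -/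
open scoped ComplexOrder

noncomputable section

open Matrix in
lemma exists_orthProj {k : Type*} [Fintype k] [DecidableEq k] (S : Submodule ℂ (k → ℂ)) :
    ∃ P, IsOrthProjOnto S P := by
  let S' : Submodule ℂ (EuclideanSpace ℂ k) := S.comap (WithLp.linearEquiv 2 ℂ (k → ℂ)).toLinearMap
  let f : EuclideanSpace ℂ k →ₗ[ℂ] EuclideanSpace ℂ k :=
    (S'.subtypeL ∘L Submodule.orthogonalProjectionOnto S' : EuclideanSpace ℂ k →L[ℂ] EuclideanSpace ℂ k)
  set P := Matrix.toEuclideanLin.symm f with hP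
  have hPf : Matrix.toEuclideanLin P = f := Matrix.toEuclideanLin.apply_symm_apply f
  have hmul : ∀ v : k → ℂ,
      P *ᵥ v = WithLp.equiv 2 (k → ℂ) (f ((WithLp.equiv 2 (k → ℂ)).symm v)) := by
    intro v; rw [← hPf]; rfl
  have hmem : ∀ v : EuclideanSpace ℂ k, v ∈ S' ↔ (WithLp.equiv 2 (k → ℂ)) v ∈ S :=
    fun _ => Iff.rfl
  have hf_mem : ∀ y, f y ∈ S' := fun y => (Submodule.orthogonalProjectionOnto S' y).2
  have hf_fix : ∀ y ∈ S', f y = y := by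
    intro y hy
    exact Submodule.starProjection_eq_self_iff.mpr hy
  refine ⟨P, ?_, ?_, ?_, ?_⟩
  · rw [Matrix.isHermitian_iff_isSymmetric, hPf]
    exact Submodule.starProjection_isSymmetric S'
  · apply Matrix.toLin'.injective
    rw [Matrix.toLin'_mul]
    apply LinearMap.ext; intro v
    show P *ᵥ (P *ᵥ v) = P *ᵥ v
    rw [hmul v, hmul, Equiv.symm_apply_apply, hf_fix _ (hf_mem _)]
  · intro x
    rw [hmul]
    exact (hmem _).mp (hf_mem _)
  · intro y hy
    have hyS : ((WithLp.equiv 2 (k → ℂ)).symm y) ∈ S' := by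
      rw [hmem, Equiv.apply_symm_apply]; exact hy
    rw [hmul, hf_fix _ hyS, Equiv.apply_symm_apply]

open Matrix in
lemma outer_psd {k : Type*} [Fintype k] (φ : k → ℂ) : (outer φ φ).PosSemidef := by
  have : outer φ φ = Matrix.replicateCol Unit φ * (Matrix.replicateCol Unit φ)ᴴ := by
    ext x y
    simp [outer, Matrix.mul_apply, Matrix.replicateCol, Matrix.conjTranspose_apply]
  rw [this]
  exact Matrix.posSemidef_self_mul_conjTranspose _

lemma sum_sq_coe {k : Type*} [Fintype k] (φ : k → ℂ) :
    ((∑ x, ‖φ x‖ ^ 2 : ℝ) : ℂ) = ∑ x, φ x * (starRingEnd ℂ) (φ x) := by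
  push_cast
  refine Finset.sum_congr rfl fun x _ => ?_
  rw [Complex.mul_conj]
  norm_cast
  simp [Complex.normSq_eq_norm_sq]

lemma outer_trace {k : Type*} [Fintype k] (φ : k → ℂ) (h : (∑ x, ‖φ x‖ ^ 2) = 1) :
    (outer φ φ).trace = 1 := by
  rw [Matrix.trace]
  have := sum_sq_coe φ
  rw [h] at this
  simpa [Matrix.diag, outer] using this.symm

open Matrix in
lemma mul_outer_mul {k : Type*} [Fintype k] (P : Matrix k k ℂ) (hP : P.IsHermitian)
    (φ χ : k → ℂ) : P * outer φ χ * P = outer (P *ᵥ φ) (P *ᵥ χ) := by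
  ext x y
  simp only [outer, Matrix.mul_apply, Matrix.of_apply, Matrix.mulVec, dotProduct,
    map_sum, _root_.map_mul]
  rw [Finset.sum_mul_sum, Finset.sum_comm]
  refine Finset.sum_congr rfl fun w _ => ?_
  rw [Finset.sum_mul]
  refine Finset.sum_congr rfl fun z _ => ?_
  have hst : (starRingEnd ℂ) (P y w) = P w y := by
    have := congrFun (congrFun hP w) y
    simpa [Matrix.conjTranspose_apply] using this
  rw [hst]
  ring

lemma trB_outer_expand {m n : Type*} [Fintype m] [Fintype n] (ψ1 ψ2 : m × n → ℂ) (a b : ℂ)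
    (i i' : m) :
    trB (outer (a • ψ1 + b • ψ2) (a • ψ1 + b • ψ2)) i i' =
      (a * (starRingEnd ℂ) a) * trB (outer ψ1 ψ1) i i'
      + (a * (starRingEnd ℂ) b) * trB (outer ψ1 ψ2) i i'
      + ((starRingEnd ℂ) a * b) * trB (outer ψ2 ψ1) i i'
      + (b * (starRingEnd ℂ) b) * trB (outer ψ2 ψ2) i i' := by
  simp only [trB, outer, Matrix.of_apply, Pi.add_apply, Pi.smul_apply, smul_eq_mul,
    map_add, _root_.map_mul, Finset.mul_sum]
  rw [← Finset.sum_add_distrib, ← Finset.sum_add_distrib, ← Finset.sum_add_distrib]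
  exact Finset.sum_congr rfl fun j _ => by ring

lemma norm_combo {k : Type*} [Fintype k] (ψ1 ψ2 : k → ℂ)
    (hu1 : (∑ x, ‖ψ1 x‖ ^ 2) = 1) (hu2 : (∑ x, ‖ψ2 x‖ ^ 2) = 1)
    (horth : ∑ x, (starRingEnd ℂ) (ψ1 x) * ψ2 x = 0) (a b : ℂ) :
    ((∑ x, ‖(a • ψ1 + b • ψ2) x‖ ^ 2 : ℝ) : ℂ)
      = a * (starRingEnd ℂ) a + b * (starRingEnd ℂ) b := by
  have h21 : ∑ x, ψ2 x * (starRingEnd ℂ) (ψ1 x) = 0 := by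
    rw [← horth]
    exact Finset.sum_congr rfl fun x _ => mul_comm _ _
  have h12 : ∑ x, ψ1 x * (starRingEnd ℂ) (ψ2 x) = 0 := by
    have := congrArg (starRingEnd ℂ) horth
    simpa [map_sum, _root_.map_mul, mul_comm] using this
  have k1 : ∑ x, ψ1 x * (starRingEnd ℂ) (ψ1 x) = 1 := by rw [← sum_sq_coe, hu1]; norm_num
  have k2 : ∑ x, ψ2 x * (starRingEnd ℂ) (ψ2 x) = 1 := by rw [← sum_sq_coe, hu2]; norm_num
  rw [sum_sq_coe]
  have expand : ∀ x, (a • ψ1 + b • ψ2) x * (starRingEnd ℂ) ((a • ψ1 + b • ψ2) x)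
      = (a * (starRingEnd ℂ) a) * (ψ1 x * (starRingEnd ℂ) (ψ1 x))
        + (a * (starRingEnd ℂ) b) * (ψ1 x * (starRingEnd ℂ) (ψ2 x))
        + ((starRingEnd ℂ) a * b) * (ψ2 x * (starRingEnd ℂ) (ψ1 x))
        + (b * (starRingEnd ℂ) b) * (ψ2 x * (starRingEnd ℂ) (ψ2 x)) := by
    intro x
    simp only [Pi.add_apply, Pi.smul_apply, smul_eq_mul, map_add, _root_.map_mul]
    ring
  rw [Finset.sum_congr rfl fun x _ => expand x, Finset.sum_add_distrib, Finset.sum_add_distrib,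
    Finset.sum_add_distrib, ← Finset.mul_sum, ← Finset.mul_sum, ← Finset.mul_sum,
    ← Finset.mul_sum, h12, h21, k1, k2]
  ring

theorem span_of_preimages_maps_to_extreme_point
    {m n : Type*} [Fintype m] [Fintype n] [DecidableEq m] [DecidableEq n]
    (S : Submodule ℂ (m × n → ℂ)) (ρA : Matrix m m ℂ)
    (ψ1 ψ2 : m × n → ℂ) (h1 : ψ1 ∈ S) (h2 : ψ2 ∈ S)
    (hu1 : (∑ x, ‖ψ1 x‖ ^ 2) = 1) (hu2 : (∑ x, ‖ψ2 x‖ ^ 2) = 1)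
    (horth : ∑ x, (starRingEnd ℂ) (ψ1 x) * ψ2 x = 0)
    (hρ1 : trB (outer ψ1 ψ1) = ρA) (hρ2 : trB (outer ψ2 ψ2) = ρA)
    (hext : ρA ∈ Set.extremePoints ℝ (DB S)) :
    ∀ ψ : m × n → ℂ, ψ ∈ Submodule.span ℂ ({ψ1, ψ2} : Set (m × n → ℂ)) →
      (∑ x, ‖ψ x‖ ^ 2) = 1 → trB (outer ψ ψ) = ρA := by
  classical
  intro ψ hspan hunit
  have memDB : ∀ φ : m × n → ℂ, φ ∈ S → (∑ x, ‖φ x‖ ^ 2) = 1 → trB (outer φ φ) ∈ DB S := by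
    intro φ hφ hu
    obtain ⟨P, hP⟩ := exists_orthProj S
    refine ⟨outer φ φ, ⟨outer_psd φ, outer_trace φ hu⟩, ⟨P, hP, ?_⟩, rfl⟩
    rw [mul_outer_mul P hP.1, hP.2.2.2 φ hφ]
  set c : ℂ := (((Real.sqrt 2)⁻¹ : ℝ) : ℂ) with hc
  have hconj_c : (starRingEnd ℂ) c = c := Complex.conj_ofReal _
  have hcc : c * (starRingEnd ℂ) c = 1 / 2 := by
    rw [hconj_c, hc]
    norm_cast
    rw [← mul_inv, Real.mul_self_sqrt (by norm_num)]
    norm_num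
  have combo_mem : ∀ a b : ℂ, a • ψ1 + b • ψ2 ∈ S := fun a b =>
    S.add_mem (S.smul_mem a h1) (S.smul_mem b h2)
  have combo_unit : ∀ a b : ℂ, a * (starRingEnd ℂ) a + b * (starRingEnd ℂ) b = 1 →
      (∑ x, ‖(a • ψ1 + b • ψ2) x‖ ^ 2) = 1 := by
    intro a b hab
    have h := norm_combo ψ1 ψ2 hu1 hu2 horth a b
    rw [hab] at h
    exact_mod_cast h
  have entry : ∀ a b : ℂ, ∀ i i', trB (outer (a • ψ1 + b • ψ2) (a • ψ1 + b • ψ2)) i i'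
      = (a * (starRingEnd ℂ) a + b * (starRingEnd ℂ) b) * ρA i i'
        + (a * (starRingEnd ℂ) b) * trB (outer ψ1 ψ2) i i'
        + ((starRingEnd ℂ) a * b) * trB (outer ψ2 ψ1) i i' := by
    intro a b i i'
    rw [trB_outer_expand, hρ1, hρ2]
    ring
  -- the four auxiliary vectors
  have hu_p : (∑ x, ‖(c • ψ1 + c • ψ2) x‖ ^ 2) = 1 :=
    combo_unit c c (by linear_combination (2 : ℂ) * hcc)
  have hu_m : (∑ x, ‖(c • ψ1 + (-c) • ψ2) x‖ ^ 2) = 1 :=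
    combo_unit c (-c) (by simp only [map_neg]; linear_combination (2 : ℂ) * hcc)
  have hu_ip : (∑ x, ‖(c • ψ1 + (c * Complex.I) • ψ2) x‖ ^ 2) = 1 :=
    combo_unit c (c * Complex.I) (by
      simp only [_root_.map_mul, Complex.conj_I]
      linear_combination (2 : ℂ) * hcc - (c * (starRingEnd ℂ) c) * Complex.I_mul_I)
  have hu_im : (∑ x, ‖(c • ψ1 + (-(c * Complex.I)) • ψ2) x‖ ^ 2) = 1 :=
    combo_unit c (-(c * Complex.I)) (by
      simp only [map_neg, _root_.map_mul, Complex.conj_I]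
      linear_combination (2 : ℂ) * hcc - (c * (starRingEnd ℂ) c) * Complex.I_mul_I)
  have hDB_p := memDB _ (combo_mem c c) hu_p
  have hDB_m := memDB _ (combo_mem c (-c)) hu_m
  have hDB_ip := memDB _ (combo_mem c (c * Complex.I)) hu_ip
  have hDB_im := memDB _ (combo_mem c (-(c * Complex.I))) hu_im
  -- first extreme-point argument : X + Y = 0 entrywise
  have hseg1 : ρA ∈ openSegment ℝ (trB (outer (c • ψ1 + c • ψ2) (c • ψ1 + c • ψ2)))
      (trB (outer (c • ψ1 + (-c) • ψ2) (c • ψ1 + (-c) • ψ2))) := by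
    refine ⟨1/2, 1/2, by norm_num, by norm_num, by norm_num, ?_⟩
    ext i i'
    simp only [Matrix.add_apply, Matrix.smul_apply, Complex.real_smul, Complex.ofReal_div,
      Complex.ofReal_one, Complex.ofReal_ofNat]
    rw [entry, entry]
    simp only [map_neg, mul_neg, neg_mul]
    linear_combination (2 * ρA i i') * hcc
  have hp1 := hext.2 hDB_p hDB_m hseg1
  have hXY : ∀ i i', trB (outer ψ1 ψ2) i i' + trB (outer ψ2 ψ1) i i' = 0 := by
    intro i i'
    have h := congrFun (congrFun hp1 i) i'
    rw [entry] at h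
    linear_combination (2 : ℂ) * h - (4 * ρA i i' + 2 * trB (outer ψ1 ψ2) i i'
      + 2 * trB (outer ψ2 ψ1) i i') * hcc
  -- second extreme-point argument : X = Y entrywise
  have hseg2 : ρA ∈ openSegment ℝ
      (trB (outer (c • ψ1 + (c * Complex.I) • ψ2) (c • ψ1 + (c * Complex.I) • ψ2)))
      (trB (outer (c • ψ1 + (-(c * Complex.I)) • ψ2) (c • ψ1 + (-(c * Complex.I)) • ψ2))) := by
    refine ⟨1/2, 1/2, by norm_num, by norm_num, by norm_num, ?_⟩
    ext i i'
    simp only [Matrix.add_apply, Matrix.smul_apply, Complex.real_smul, Complex.ofReal_div,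
      Complex.ofReal_one, Complex.ofReal_ofNat]
    rw [entry, entry]
    simp only [map_neg, _root_.map_mul, Complex.conj_I, mul_neg, neg_mul, neg_neg]
    linear_combination (2 * ρA i i' - ρA i i' * Complex.I * Complex.I) * hcc
      - (c * (starRingEnd ℂ) c * ρA i i') * Complex.I_mul_I
      + (Complex.I * Complex.I * ρA i i') * hcc
  have hp2 := hext.2 hDB_ip hDB_im hseg2
  have hXeqY : ∀ i i', trB (outer ψ1 ψ2) i i' = trB (outer ψ2 ψ1) i i' := by
    intro i i'
    have h := congrFun (congrFun hp2 i) i'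
    rw [entry] at h
    simp only [_root_.map_mul, Complex.conj_I, mul_neg, neg_mul] at h
    linear_combination (2 * Complex.I) * h
      + (2 * (c * (starRingEnd ℂ) c) * ρA i i' * Complex.I
        + 2 * (c * (starRingEnd ℂ) c) * trB (outer ψ1 ψ2) i i'
        - 2 * (c * (starRingEnd ℂ) c) * trB (outer ψ2 ψ1) i i') * Complex.I_mul_I
      + (-4 * Complex.I * ρA i i' - 2 * trB (outer ψ1 ψ2) i i'
        + 2 * trB (outer ψ2 ψ1) i i') * hcc
  have hX0 : ∀ i i', trB (outer ψ1 ψ2) i i' = 0 := by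
    intro i i'
    have h1' := hXY i i'
    have h2' := hXeqY i i'
    linear_combination (1/2 : ℂ) * h1' + (1/2 : ℂ) * h2'
  have hY0 : ∀ i i', trB (outer ψ2 ψ1) i i' = 0 := by
    intro i i'
    linear_combination hXY i i' - hX0 i i'
  -- conclude
  obtain ⟨a, b, hab⟩ := Submodule.mem_span_pair.mp hspan
  have habs : a * (starRingEnd ℂ) a + b * (starRingEnd ℂ) b = 1 := by
    have h := norm_combo ψ1 ψ2 hu1 hu2 horth a b
    rw [hab, hunit] at h
    exact_mod_cast h.symm
  ext i i'
  rw [← hab, entry, hX0, hY0, habs]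
  ring

end
end

section
/- Let S be a ℂ-submodule of (m × n → ℂ). If Q lies in the intrinsic interior (intrinsicInterior over ℝ) of the convex set D_B(S) = {trB ρ | ρ a density matrix supported on S}, then there exists a density matrix ρ supported on S with trB ρ = Q whose rank equals dim S (i.e., ρ has full rank on S). -/
open scoped ComplexOrder

noncomputable section

section Aux
variable {k : Type*} [Fintype k] [DecidableEq k]

lemma mulVec_ext' {A B : Matrix k k ℂ} (h : ∀ x, A.mulVec x = B.mulVec x) : A = B := by
  have : Matrix.toLin' A = Matrix.toLin' B := by
    ext x; simp [Matrix.toLin'_apply, h]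
  exact Matrix.toLin'.injective this

def sEuc (S : Submodule ℂ (k → ℂ)) : Submodule ℂ (EuclideanSpace ℂ k) :=
  S.comap (WithLp.linearEquiv 2 ℂ (k → ℂ) : WithLp 2 (k → ℂ) →ₗ[ℂ] (k → ℂ))

lemma mem_sEuc {S : Submodule ℂ (k → ℂ)} {v : EuclideanSpace ℂ k} :
    v ∈ sEuc S ↔ WithLp.equiv 2 (k → ℂ) v ∈ S := Iff.rfl

def projCLM (S : Submodule ℂ (k → ℂ)) : EuclideanSpace ℂ k →L[ℂ] EuclideanSpace ℂ k :=
  (sEuc S).subtypeL ∘L Submodule.orthogonalProjection (sEuc S)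

def projMat (S : Submodule ℂ (k → ℂ)) : Matrix k k ℂ :=
  (Matrix.toEuclideanCLM (𝕜 := ℂ) (n := k)).symm (projCLM S)

lemma toEuclideanCLM_projMat (S : Submodule ℂ (k → ℂ)) :
    Matrix.toEuclideanCLM (𝕜 := ℂ) (n := k) (projMat S) = projCLM S := by
  simp [projMat]

lemma projMat_mulVec (S : Submodule ℂ (k → ℂ)) (x : k → ℂ) :
    (projMat S).mulVec x =
      WithLp.equiv 2 (k → ℂ) (projCLM S ((WithLp.equiv 2 (k → ℂ)).symm x)) := by
  rw [← toEuclideanCLM_projMat]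
  simp [Matrix.toLin'_apply]

lemma projMat_isOrthProj (S : Submodule ℂ (k → ℂ)) : IsOrthProjOnto S (projMat S) := by
  have hmem : ∀ v, projCLM S v ∈ sEuc S := fun v => (Submodule.orthogonalProjection (sEuc S) v).2
  have hfix : ∀ v ∈ sEuc S, projCLM S v = v := by
    intro v hv
    simpa [projCLM] using congrArg Subtype.val
      (Submodule.orthogonalProjection_mem_subspace_eq_self (K := sEuc S) ⟨v, hv⟩)
  refine ⟨?_, ?_, ?_, ?_⟩
  · have h2 := (Matrix.toEuclideanCLM (𝕜 := ℂ) (n := k)).symm.map_star' (projCLM S)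
    have h3 : star (projCLM S) = projCLM S :=
      (isSelfAdjoint_starProjection (sEuc S)).star_eq
    rw [h3] at h2
    exact h2.symm
  · have hgg : projCLM S * projCLM S = projCLM S := by
      refine ContinuousLinearMap.ext fun v => ?_
      exact hfix _ (hmem v)
    rw [projMat, ← map_mul, hgg]
  · intro x
    rw [projMat_mulVec]
    exact (hmem _ : _ ∈ sEuc S)
  · intro y hy
    have hf := hfix ((WithLp.equiv 2 (k → ℂ)).symm y) (by simpa [mem_sEuc] using hy)
    rw [projMat_mulVec, hf]
    simp

lemma orthProj_unique {S : Submodule ℂ (k → ℂ)} {P P' : Matrix k k ℂ}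
    (h : IsOrthProjOnto S P) (h' : IsOrthProjOnto S P') : P = P' := by
  have h1 : P' * P = P := mulVec_ext' fun x => by
    rw [← Matrix.mulVec_mulVec]
    exact h'.2.2.2 _ (h.2.2.1 x)
  have h2 : P * P' = P' := mulVec_ext' fun x => by
    rw [← Matrix.mulVec_mulVec]
    exact h.2.2.2 _ (h'.2.2.1 x)
  calc
    P = P.conjTranspose := h.1.symm
    _ = (P' * P).conjTranspose := by rw [h1]
    _ = P.conjTranspose * P'.conjTranspose := Matrix.conjTranspose_mul _ _
    _ = P * P' := by rw [h.1, h'.1]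
    _ = P' := h2

lemma supportedOn_iff {S : Submodule ℂ (k → ℂ)} {T : Matrix k k ℂ} :
    SupportedOn S T ↔ projMat S * T * projMat S = T := by
  constructor
  · rintro ⟨P, hP, hT⟩
    rwa [orthProj_unique hP (projMat_isOrthProj S)] at hT
  · intro h
    exact ⟨projMat S, projMat_isOrthProj S, h⟩

lemma projMat_trace (S : Submodule ℂ (k → ℂ)) :
    (projMat S).trace = (Module.finrank ℂ S : ℂ) := by
  have hP := projMat_isOrthProj S
  have hp : LinearMap.IsProj S (Matrix.mulVecLin (projMat S)) :=
    ⟨fun x => hP.2.2.1 x, fun x hx => hP.2.2.2 x hx⟩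
  have ht := hp.trace
  rw [LinearMap.trace_eq_matrix_trace ℂ (Pi.basisFun ℂ k), LinearMap.toMatrix_eq_toMatrix',
    ← Matrix.toLin'_apply', LinearMap.toMatrix'_toLin'] at ht
  exact ht

lemma projMat_rank (S : Submodule ℂ (k → ℂ)) :
    (projMat S).rank = Module.finrank ℂ S := by
  have hP := projMat_isOrthProj S
  have hr : LinearMap.range (projMat S).mulVecLin = S := by
    apply le_antisymm
    · rintro _ ⟨x, rfl⟩
      exact hP.2.2.1 x
    · intro y hy
      exact ⟨y, hP.2.2.2 y hy⟩
  rw [Matrix.rank, hr]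

lemma rank_le_of_ker_le {A B : Matrix k k ℂ}
    (h : LinearMap.ker A.mulVecLin ≤ LinearMap.ker B.mulVecLin) : B.rank ≤ A.rank := by
  have ha := LinearMap.finrank_range_add_finrank_ker A.mulVecLin
  have hb := LinearMap.finrank_range_add_finrank_ker B.mulVecLin
  have hk := Submodule.finrank_mono h
  rw [Matrix.rank, Matrix.rank]
  omega

lemma posSemidef_real_smul {A : Matrix k k ℂ} (hA : A.PosSemidef) {c : ℝ} (hc : 0 ≤ c) :
    ((c : ℂ) • A).PosSemidef := by
  refine Matrix.posSemidef_iff_dotProduct_mulVec.mpr ⟨?_, ?_⟩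
  · unfold Matrix.IsHermitian
    rw [Matrix.conjTranspose_smul, Complex.star_def, Complex.conj_ofReal, hA.1]
  · intro x
    rw [Matrix.smul_mulVec, dotProduct_smul, smul_eq_mul]
    exact mul_nonneg (Complex.zero_le_real.2 hc) (hA.dotProduct_mulVec_nonneg x)

end Aux

section TrB
variable {m n : Type*} [Fintype m] [Fintype n]

lemma trB_add (ρ σ : Matrix (m × n) (m × n) ℂ) : trB (ρ + σ) = trB ρ + trB σ := by
  ext i i'
  simp [trB, Finset.sum_add_distrib]

lemma trB_smul (c : ℂ) (ρ : Matrix (m × n) (m × n) ℂ) : trB (c • ρ) = c • trB ρ := by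
  ext i i'
  simp [trB, Finset.mul_sum]

end TrB

theorem interior_point_has_full_rank_preimage
    {m n : Type*} [Fintype m] [Fintype n] [DecidableEq m] [DecidableEq n]
    (S : Submodule ℂ (m × n → ℂ))
    (Q : Matrix m m ℂ) (hQ : Q ∈ intrinsicInterior ℝ (DB S)) :
    ∃ ρ : Matrix (m × n) (m × n) ℂ, IsDensity ρ ∧ SupportedOn S ρ ∧
      trB ρ = Q ∧ ρ.rank = Module.finrank ℂ S := by
  classical
  -- unpack the intrinsic interior
  rw [intrinsicInterior] at hQ
  obtain ⟨q, hq, hqQ⟩ := hQ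
  have hQDB : Q ∈ DB S := by
    have := interior_subset hq
    rwa [← hqQ]
  obtain ⟨t, hts, htopen, hqt⟩ := mem_interior.1 hq
  obtain ⟨U, hUopen, rfl⟩ := isOpen_induced_iff.1 htopen
  have hQU : Q ∈ U := by rw [← hqQ]; exact hqt
  -- the dimension of S is positive
  set d : ℕ := Module.finrank ℂ S with hd
  have hdpos : 0 < d := by
    by_contra hcon
    have hd0 : d = 0 := by omega
    have hSbot : S = ⊥ := Submodule.finrank_eq_zero.1 hd0
    obtain ⟨ρQ, hρQ, ⟨P, hP, hsupp⟩, _⟩ := hQDB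
    have hP0 : P = (0 : Matrix (m × n) (m × n) ℂ) := mulVec_ext' fun x => by
      have := hP.2.2.1 x
      rw [hSbot, Submodule.mem_bot] at this
      simp [this]
    rw [hP0] at hsupp
    simp only [Matrix.zero_mul, Matrix.mul_zero] at hsupp
    rw [← hsupp] at hρQ
    simpa using hρQ.2
  have hdne : ((d : ℂ)) ≠ 0 := by
    simp only [ne_eq, Nat.cast_eq_zero]
    omega
  -- the maximally mixed state on S
  set c₀ : ℝ := (d : ℝ)⁻¹ with hc₀
  have hc₀pos : 0 < c₀ := by rw [hc₀]; positivity
  set ρ₀ : Matrix (m × n) (m × n) ℂ := (c₀ : ℂ) • projMat S with hρ₀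
  have hP := projMat_isOrthProj S
  have hPP := hP.2.1
  have hρ₀supp : SupportedOn S ρ₀ := by
    rw [supportedOn_iff, hρ₀, Matrix.mul_smul, Matrix.smul_mul, hPP, hPP]
  have hρ₀psd : ρ₀.PosSemidef := by
    apply posSemidef_real_smul _ hc₀pos.le
    have : projMat S = (projMat S).conjTranspose * projMat S := by
      rw [hP.1, hPP]
    rw [this]
    exact Matrix.posSemidef_conjTranspose_mul_self _
  have hρ₀tr : ρ₀.trace = 1 := by
    rw [hρ₀, Matrix.trace_smul, projMat_trace, smul_eq_mul, hc₀]
    push_cast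
    field_simp
    rfl
  have hρ₀rank : ∀ x, ρ₀.mulVec x = 0 → (projMat S).mulVec x = 0 := by
    intro x hx
    rw [hρ₀, Matrix.smul_mulVec] at hx
    rcases smul_eq_zero.1 hx with h | h
    · exfalso
      rw [Complex.ofReal_eq_zero, hc₀] at h
      exact absurd h (by positivity)
    · exact h
  set Q₀ : Matrix m m ℂ := trB ρ₀ with hQ₀
  have hQ₀DB : Q₀ ∈ DB S := ⟨ρ₀, ⟨hρ₀psd, hρ₀tr⟩, hρ₀supp, rfl⟩
  -- find ε > 0 with Q + ε • (Q - Q₀) ∈ DB S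
  have hQmem : Q ∈ affineSpan ℝ (DB S) := subset_affineSpan ℝ _ hQDB
  have hQ₀mem : Q₀ ∈ affineSpan ℝ (DB S) := subset_affineSpan ℝ _ hQ₀DB
  have hZmem : ∀ ε : ℝ, Q + ε • (Q - Q₀) ∈ affineSpan ℝ (DB S) := by
    intro ε
    have := AffineSubspace.smul_vsub_vadd_mem (affineSpan ℝ (DB S)) ε hQmem hQ₀mem hQmem
    simpa [vsub_eq_sub, vadd_eq_add, add_comm] using this
  have hcont : Continuous fun ε : ℝ => Q + ε • (Q - Q₀) := by
    exact continuous_const.add (continuous_id.smul continuous_const)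
  have hev : ∀ᶠ ε in nhds (0 : ℝ), Q + ε • (Q - Q₀) ∈ U := by
    have h0 : Q + (0 : ℝ) • (Q - Q₀) = Q := by simp
    have := hcont.continuousAt (x := 0)
    exact this.eventually_mem (by rw [h0]; exact hUopen.mem_nhds hQU)
  obtain ⟨ε, hεpos, hεU⟩ : ∃ ε : ℝ, 0 < ε ∧ Q + ε • (Q - Q₀) ∈ U := by
    have h1 : ∀ᶠ ε in nhdsWithin (0 : ℝ) (Set.Ioi 0), Q + ε • (Q - Q₀) ∈ U :=
      hev.filter_mono nhdsWithin_le_nhds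
    have h2 : ∀ᶠ ε in nhdsWithin (0 : ℝ) (Set.Ioi 0), ε ∈ Set.Ioi (0:ℝ) :=
      eventually_mem_nhdsWithin
    obtain ⟨ε, hε1, hε2⟩ := (h2.and h1).exists
    exact ⟨ε, hε1, hε2⟩
  set Z : Matrix m m ℂ := Q + ε • (Q - Q₀) with hZ
  have hZDB : Z ∈ DB S := by
    have : (⟨Z, hZmem ε⟩ : affineSpan ℝ (DB S)) ∈
        (Subtype.val ⁻¹' U : Set (affineSpan ℝ (DB S))) := hεU
    exact hts this
  obtain ⟨ρ', hρ'dens, hρ'supp, hρ'tr⟩ := hZDB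
  -- assemble the full-rank preimage
  set c : ℝ := (1 + ε)⁻¹ with hc
  have h1ε : (0:ℝ) < 1 + ε := by linarith
  have hcpos : 0 < c := by positivity
  set ρ : Matrix (m × n) (m × n) ℂ := (c : ℂ) • ρ' + ((ε * c : ℝ) : ℂ) • ρ₀ with hρdef
  have h1εC : ((1 + ε : ℝ) : ℂ) ≠ 0 := by
    exact_mod_cast ne_of_gt h1ε
  refine ⟨ρ, ⟨?_, ?_⟩, ?_, ?_, ?_⟩
  · exact (posSemidef_real_smul hρ'dens.1 hcpos.le).add
      (posSemidef_real_smul hρ₀psd (by positivity))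
  · rw [hρdef, Matrix.trace_add, Matrix.trace_smul, Matrix.trace_smul,
      hρ'dens.2, hρ₀tr, smul_eq_mul, smul_eq_mul, mul_one, mul_one]
    rw [← Complex.ofReal_add]
    rw [show c + ε * c = 1 by rw [hc]; field_simp]
    norm_num
  · rw [supportedOn_iff] at hρ'supp hρ₀supp ⊢
    rw [hρdef]
    rw [Matrix.mul_add, Matrix.add_mul, Matrix.mul_smul, Matrix.smul_mul,
      Matrix.mul_smul, Matrix.smul_mul, hρ'supp, hρ₀supp]
  · -- trB ρ = Q
    rw [hρdef, trB_add, trB_smul, trB_smul, hρ'tr, ← hQ₀, hZ]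
    have hsm : ∀ (r : ℝ) (M : Matrix m m ℂ), r • M = (r : ℂ) • M := by
      intro r M
      ext i j
      simp [Matrix.smul_apply, Complex.real_smul]
    rw [hsm ε (Q - Q₀)]
    push_cast
    have h1εC' : (1 + (ε:ℂ)) ≠ 0 := by
      push_cast at h1εC ⊢
      exact h1εC
    match_scalars <;> (rw [hc]; push_cast; field_simp; try ring)
  · -- rank
    apply le_antisymm
    · rw [supportedOn_iff] at hρ'supp hρ₀supp
      have hρsupp : projMat S * ρ * projMat S = ρ := by
        rw [hρdef, Matrix.mul_add, Matrix.add_mul, Matrix.mul_smul, Matrix.smul_mul,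
          Matrix.mul_smul, Matrix.smul_mul, hρ'supp, hρ₀supp]
      calc ρ.rank = (projMat S * (ρ * projMat S)).rank := by rw [← Matrix.mul_assoc, hρsupp]
        _ ≤ (projMat S).rank := Matrix.rank_mul_le_left _ _
        _ = d := projMat_rank S
    · have hker : LinearMap.ker ρ.mulVecLin ≤ LinearMap.ker (projMat S).mulVecLin := by
        intro x hx
        rw [LinearMap.mem_ker, Matrix.mulVecLin_apply] at hx ⊢
        have hdot : dotProduct (star x) (ρ.mulVec x) = 0 := by rw [hx]; simp
        rw [hρdef, Matrix.add_mulVec, Matrix.smul_mulVec, Matrix.smul_mulVec,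
          dotProduct_add, dotProduct_smul, dotProduct_smul] at hdot
        have h1 : (0:ℂ) ≤ dotProduct (star x) (ρ'.mulVec x) := hρ'dens.1.dotProduct_mulVec_nonneg x
        have h2 : (0:ℂ) ≤ dotProduct (star x) (ρ₀.mulVec x) := hρ₀psd.dotProduct_mulVec_nonneg x
        have hc1 : (0:ℂ) < (c : ℂ) := by exact_mod_cast hcpos
        have hc2 : (0:ℂ) < ((ε * c : ℝ) : ℂ) := by
          exact_mod_cast mul_pos hεpos hcpos
        have hz : dotProduct (star x) (ρ₀.mulVec x) = 0 := by
          by_contra hne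
          have h2' : (0:ℂ) < dotProduct (star x) (ρ₀.mulVec x) :=
            lt_of_le_of_ne h2 (Ne.symm hne)
          have hpos : (0:ℂ) < (c : ℂ) • dotProduct (star x) (ρ'.mulVec x) +
              ((ε * c : ℝ) : ℂ) • dotProduct (star x) (ρ₀.mulVec x) := by
            have ha : (0:ℂ) ≤ (c : ℂ) • dotProduct (star x) (ρ'.mulVec x) := by
              rw [smul_eq_mul]
              exact mul_nonneg hc1.le h1
            have hb : (0:ℂ) < ((ε * c : ℝ) : ℂ) • dotProduct (star x) (ρ₀.mulVec x) := by
              rw [smul_eq_mul]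
              exact mul_pos hc2 h2'
            calc (0:ℂ) < _ := hb
              _ ≤ _ := le_add_of_nonneg_left ha
          rw [hdot] at hpos
          exact lt_irrefl 0 hpos
        have := hρ₀psd.dotProduct_mulVec_zero_iff x |>.1 hz
        exact hρ₀rank x this
      calc d = (projMat S).rank := (projMat_rank S).symm
        _ ≤ ρ.rank := rank_le_of_ker_le hker

end
end
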